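/- Let ν be a kernel assigning to each x ∈ ℝ a symmetric Borel measure ν(x,·) on ℝ with ν(x,{0}) = 0, ν(x,−B) = ν(x,B) and sup_x ∫_ℝ min{1,y²} ν(x,dy) < ∞; let c : ℝ → [0,∞) be bounded Borel, and set q(x,ξ) := (1/2)c(x)ξ² + ∫_ℝ (1 − cos(ξy)) ν(x,dy) and N(x,y) := ν(x,(y,∞)). Assume: (i) there exists y₀ > 0 such that for every x, y ↦ N(x,y) is convex on (y₀,∞), and on (y₀,∞) the measure ν(x,·) has a density f(x,·) (i.e. ν(x,B) = ∫_B f(x,y) dy for every Borel B ⊆ (y₀,∞)) which is nonincreasing in y on (y₀,∞); (ii) for every open set O ⊆ ℝ the function x ↦ ν(x, O − x) is lower semicontinuous; (iii) lim_{ξ→0} inf_{x∈ℝ} q(x,ξ)/ξ² = ∞; (iv) there exists y₁ > 0 with inf_{x∈ℝ} ∫_{y₁}^∞ y N(x,y) dy > 0. If ∫_{y₀}^∞ dy / ( y³ · inf_{x∈ℝ} f(x,y) ) < ∞, then there exists r > 0 with ∫_{{|ξ|<r}} dξ / inf_{x∈ℝ} q(x,ξ) < ∞. -/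

import Mathlib

open MeasureTheory Filter Topology
open scoped ENNReal

/-- The symbol of a one-dimensional symmetric nice Feller process with symmetric Lévy
kernel on ℝ: `q(x,ξ) = (1/2)c(x)ξ² + ∫_ℝ (1 − cos(ξy)) ν(x,dy)`, valued in `[0,∞]`. -/
noncomputable def symSymbolR (c : ℝ → ℝ) (ν : ℝ → MeasureTheory.Measure ℝ)
    (x ξ : ℝ) : ℝ≥0∞ :=
  ENNReal.ofReal ((1 / 2) * c x * ξ ^ 2) +
    ∫⁻ y, ENNReal.ofReal (1 - Real.cos (ξ * y)) ∂(ν x)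

lemma aux_cos (t : ℝ) (ht : |t| ≤ 1) : t ^ 2 / 4 ≤ 1 - Real.cos t := by
  have h := abs_le.1 (Real.cos_bound ht)
  have h4 : |t| ^ 4 ≤ |t| ^ 2 := pow_le_pow_of_le_one (abs_nonneg t) ht (by norm_num)
  have hsq : |t| ^ 2 = t ^ 2 := sq_abs t
  nlinarith [sq_nonneg t]

lemma aux_image_eq_lintegral {s : Set ℝ} {φ φ' : ℝ → ℝ} (hs : MeasurableSet s)
    (hφ' : ∀ x ∈ s, HasDerivWithinAt φ (φ' x) s x) (hφ : Set.InjOn φ s) (g : ℝ → ℝ≥0∞) :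
    ∫⁻ x in φ '' s, g x = ∫⁻ x in s, ENNReal.ofReal |φ' x| * g (φ x) := by
  simpa only [ContinuousLinearMap.det_toSpanSingleton] using
    lintegral_image_eq_lintegral_abs_det_fderiv_mul volume hs
      (fun x hx => (hφ' x hx).hasFDerivWithinAt) hφ g

/-- a sufficient condition for transience in terms of the (nonincreasing)
density `f(x,·)` of the Lévy kernel on `(y₀,∞)`, under uniform quasi-unimodality, lower
semicontinuity, and conditions (3.2), (3.12). -/
theorem stmt19 (c : ℝ → ℝ) (ν : ℝ → MeasureTheory.Measure ℝ) (f : ℝ → ℝ → ℝ)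
    (y₀ : ℝ) (hy₀ : 0 < y₀)
    (hc : ∀ x, 0 ≤ c x) (hcb : ∃ K : ℝ, ∀ x, c x ≤ K)
    (hν0 : ∀ x, ν x {0} = 0)
    (hνsym : ∀ x, ∀ B : Set ℝ, MeasurableSet B → ν x (Neg.neg ⁻¹' B) = ν x B)
    (hν : (⨆ x, ∫⁻ y, ENNReal.ofReal (min 1 (y ^ 2)) ∂(ν x)) < ∞)
    -- (i) uniform quasi-unimodality with nonincreasing density on (y₀,∞)
    (hqum : ∀ x, ConvexOn ℝ (Set.Ioi y₀) fun y => (ν x (Set.Ioi y)).toReal)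
    (hfnonneg : ∀ x y, 0 ≤ f x y)
    (hdens : ∀ x, ∀ B : Set ℝ, MeasurableSet B → B ⊆ Set.Ioi y₀ →
      ν x B = ∫⁻ y in B, ENNReal.ofReal (f x y))
    (hdecr : ∀ x, AntitoneOn (f x) (Set.Ioi y₀))
    -- (ii) lower semicontinuity
    (hlsc : ∀ O : Set ℝ, IsOpen O →
      LowerSemicontinuous fun x => ν x ((fun z => z + x) ⁻¹' O))
    -- (iii) condition (3.2)
    (hlim : Tendsto (fun ξ : ℝ => (⨅ x, symSymbolR c ν x ξ) / ENNReal.ofReal (ξ ^ 2))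
      (𝓝[≠] (0 : ℝ)) (𝓝 ∞))
    -- (iv) condition (3.12)
    (htail : ∃ y₁ > (0 : ℝ),
      0 < ⨅ x, ∫⁻ y in Set.Ioi y₁, ENNReal.ofReal y * ν x (Set.Ioi y))
    -- measurability
    (hmi : Measurable fun ξ : ℝ => ⨅ x, symSymbolR c ν x ξ)
    (hmf : Measurable fun y : ℝ => ⨅ x, ENNReal.ofReal (f x y))
    -- main hypothesis
    (hint : ∫⁻ y in Set.Ioi y₀,
      (ENNReal.ofReal (y ^ 3) * ⨅ x, ENNReal.ofReal (f x y))⁻¹ < ∞) :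
    ∃ r > (0 : ℝ), ∫⁻ ξ in Metric.ball (0 : ℝ) r,
      (⨅ x, symSymbolR c ν x ξ)⁻¹ < ∞ := by
  classical
  set g : ℝ → ℝ≥0∞ := fun y => ⨅ x, ENNReal.ofReal (f x y) with hg
  set r : ℝ := (2 * y₀)⁻¹ with hr
  have hrpos : 0 < r := by positivity
  set F : ℝ → ℝ≥0∞ := fun ξ => ENNReal.ofReal (32 * |ξ|) * (g |ξ|⁻¹)⁻¹ with hF
  -- pointwise bound
  have key : ∀ ξ : ℝ, ξ ≠ 0 → |ξ| < r → (⨅ x, symSymbolR c ν x ξ)⁻¹ ≤ F ξ := by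
    intro ξ hξ hξr
    have hab : 0 < |ξ| := abs_pos.mpr hξ
    set a : ℝ := |ξ|⁻¹ with hadef
    have hapos : 0 < a := by positivity
    have ha : 2 * y₀ < a := by
      rw [hadef, ← inv_inv (2 * y₀)]
      exact (inv_lt_inv₀ (by positivity) hab).mpr hξr
    have hy₀a : y₀ < a / 2 := by linarith
    set B : Set ℝ := Set.Ioc (a / 2) a with hB
    have hBsub : B ⊆ Set.Ioi y₀ := fun y hy => lt_trans hy₀a hy.1
    -- lower bound for the symbol
    have hbound : ENNReal.ofReal (a / 32) * g a ≤ ⨅ x, symSymbolR c ν x ξ := by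
      refine le_iInf fun x => ?_
      have h1 : ∫⁻ y in B, ENNReal.ofReal (1 - Real.cos (ξ * y)) ∂(ν x) ≤
          symSymbolR c ν x ξ :=
        le_trans (setLIntegral_le_lintegral _ _) (self_le_add_left _ _)
      have h2 : ENNReal.ofReal (1 / 16) * ν x B ≤
          ∫⁻ y in B, ENNReal.ofReal (1 - Real.cos (ξ * y)) ∂(ν x) := by
        rw [← setLIntegral_const]
        refine setLIntegral_mono' measurableSet_Ioc fun y hy => ?_
        have hy1 : a / 2 < y := hy.1
        have hy2 : y ≤ a := hy.2
        have hypos : 0 < y := lt_trans (by positivity) hy1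
        have habs : |ξ * y| = |ξ| * y := by
          rw [abs_mul, abs_of_pos hypos]
        have hle1 : |ξ * y| ≤ 1 := by
          rw [habs]
          calc |ξ| * y ≤ |ξ| * a := by nlinarith
          _ = 1 := by rw [hadef]; field_simp
        have hge : 1 / 2 < |ξ| * y := by
          have : |ξ| * (a / 2) < |ξ| * y := by nlinarith
          have h12 : |ξ| * (a / 2) = 1 / 2 := by
            rw [hadef]; field_simp
          linarith
        refine ENNReal.ofReal_le_ofReal ?_
        have hc4 := aux_cos (ξ * y) hle1
        have : (ξ * y) ^ 2 = (|ξ| * y) ^ 2 := by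
          rw [← habs, sq_abs]
        nlinarith
      have h3 : ν x B = ∫⁻ y in B, ENNReal.ofReal (f x y) :=
        hdens x B measurableSet_Ioc hBsub
      have h4 : g a * ENNReal.ofReal (a / 2) ≤ ν x B := by
        have hvol : volume B = ENNReal.ofReal (a / 2) := by
          rw [hB, Real.volume_Ioc]; congr 1; ring
        rw [h3, ← hvol, ← setLIntegral_const]
        refine setLIntegral_mono' measurableSet_Ioc fun y hy => ?_
        refine le_trans (iInf_le _ x) (ENNReal.ofReal_le_ofReal ?_)
        exact hdecr x (hBsub hy) (Set.mem_Ioi.mpr (by linarith)) hy.2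
      calc ENNReal.ofReal (a / 32) * g a
          = ENNReal.ofReal (1 / 16) * (g a * ENNReal.ofReal (a / 2)) := by
            rw [← mul_assoc, mul_comm (ENNReal.ofReal (1/16)) (g a), mul_assoc,
              ← ENNReal.ofReal_mul (by norm_num), show (1/16 : ℝ) * (a/2) = a/32 by ring,
              mul_comm]
        _ ≤ ENNReal.ofReal (1 / 16) * ν x B := by gcongr
        _ ≤ _ := le_trans h2 h1
    -- invert
    have hinv := ENNReal.inv_le_inv' hbound
    refine le_trans hinv ?_
    rw [ENNReal.mul_inv (Or.inl (ENNReal.ofReal_pos.mpr (by positivity)).ne')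
      (Or.inl ENNReal.ofReal_ne_top)]
    rw [← ENNReal.ofReal_inv_of_pos (by positivity),
      show (a / 32)⁻¹ = 32 * |ξ| by rw [hadef]; field_simp]
  -- reduce to integral of F
  have step1 : ∫⁻ ξ in Metric.ball (0 : ℝ) r, (⨅ x, symSymbolR c ν x ξ)⁻¹ ≤
      ∫⁻ ξ in Metric.ball (0 : ℝ) r, F ξ := by
    refine setLIntegral_mono_ae' measurableSet_ball ?_
    have h0 : ∀ᵐ ξ : ℝ, ξ ≠ (0 : ℝ) := by
      rw [ae_iff]
      simpa using Real.volume_singleton (x := 0)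
    filter_upwards [h0] with ξ hξ0 hξb
    exact key ξ hξ0 (by simpa [Real.norm_eq_abs] using mem_ball_zero_iff.mp hξb)
  -- the substituted integral
  have Hsub : ∀ φ : ℝ → ℝ, (φ = fun y => y⁻¹) ∨ (φ = fun y => -y⁻¹) →
      ∫⁻ ξ in φ '' Set.Ioi (2 * y₀), F ξ =
        ∫⁻ y in Set.Ioi (2 * y₀), ENNReal.ofReal 32 *
          (ENNReal.ofReal (y ^ 3) * g y)⁻¹ := by
    intro φ hφcase
    have hderiv : ∀ y ∈ Set.Ioi (2 * y₀),
        HasDerivWithinAt φ ((if φ = fun y => y⁻¹ then -1 else 1) * (y ^ 2)⁻¹)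
          (Set.Ioi (2 * y₀)) y := by
      intro y hy
      have hy0 : y ≠ 0 := by have : 0 < y := lt_trans (by positivity) hy; positivity
      rcases hφcase with h | h <;> subst h
      · simp only [if_pos rfl]
        simpa [neg_mul, one_mul] using (hasDerivAt_inv hy0).hasDerivWithinAt
      · have hne : (fun y : ℝ => -y⁻¹) ≠ fun y : ℝ => y⁻¹ := by
          intro h
          have := congrFun h 1
          norm_num at this
        simp only [if_neg hne]
        simpa [Pi.neg_def] using ((hasDerivAt_inv hy0).neg).hasDerivWithinAt
    have hinj : Set.InjOn φ (Set.Ioi (2 * y₀)) := by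
      rcases hφcase with h | h <;> subst h
      · exact inv_injective.injOn
      · exact (neg_injective.comp inv_injective).injOn
    rw [aux_image_eq_lintegral measurableSet_Ioi hderiv hinj]
    refine setLIntegral_congr_fun measurableSet_Ioi ?_
    intro y hy
    beta_reduce
    have hypos : 0 < y := lt_trans (by positivity) hy
    have habs : |(if φ = fun y => y⁻¹ then (-1:ℝ) else 1) * (y ^ 2)⁻¹| = (y ^ 2)⁻¹ := by
      split <;> simp [abs_of_pos, abs_of_nonneg, inv_nonneg.mpr (sq_nonneg y)]
    have hφy : |φ y| = y⁻¹ := by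
      rcases hφcase with h | h <;> subst h <;>
        simp [abs_of_pos (inv_pos.mpr hypos)]
    have hφyinv : |φ y|⁻¹ = y := by rw [hφy, inv_inv]
    rw [habs, hF]
    simp only [hφy, inv_inv]
    rw [← mul_assoc, ← ENNReal.ofReal_mul (by positivity),
      show (y^2)⁻¹ * (32 * y⁻¹) = 32 * (y^3)⁻¹ by field_simp,
      ENNReal.ofReal_mul (by norm_num),
      ENNReal.ofReal_inv_of_pos (by positivity), mul_assoc,
      ENNReal.mul_inv (Or.inl (ENNReal.ofReal_pos.mpr (by positivity)).ne')
        (Or.inl ENNReal.ofReal_ne_top)]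
  -- images
  have himg_pos : (fun y : ℝ => y⁻¹) '' Set.Ioi (2 * y₀) = Set.Ioo 0 r := by
    ext ξ
    constructor
    · rintro ⟨y, hy, rfl⟩
      have hy' : 0 < y := lt_trans (by positivity) hy
      exact ⟨by positivity, by rw [hr, inv_lt_inv₀ hy' (by positivity)]; exact hy⟩
    · rintro ⟨h1, h2⟩
      refine ⟨ξ⁻¹, ?_, inv_inv ξ⟩
      rw [Set.mem_Ioi, ← inv_inv (2 * y₀)]
      exact (inv_lt_inv₀ (by positivity) h1).mpr h2
  have himg_neg : (fun y : ℝ => -y⁻¹) '' Set.Ioi (2 * y₀) = Set.Ioo (-r) 0 := by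
    have : (fun y : ℝ => -y⁻¹) = (fun t : ℝ => -t) ∘ fun y => y⁻¹ := rfl
    rw [this, Set.image_comp, himg_pos]
    ext t
    simp only [Set.image_neg_eq_neg, Set.mem_neg, Set.mem_Ioo]
    constructor
    · rintro ⟨h1, h2⟩; constructor <;> linarith
    · rintro ⟨h1, h2⟩; constructor <;> linarith
  -- finiteness of the F-integral
  have hFfin : ∫⁻ ξ in Metric.ball (0 : ℝ) r, F ξ < ∞ := by
    have hIoi : ∫⁻ y in Set.Ioi (2 * y₀), ENNReal.ofReal 32 *
        (ENNReal.ofReal (y ^ 3) * g y)⁻¹ < ∞ := by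
      rw [lintegral_const_mul' _ _ ENNReal.ofReal_ne_top]
      refine ENNReal.mul_lt_top ENNReal.ofReal_lt_top ?_
      exact lt_of_le_of_lt (lintegral_mono_set (Set.Ioi_subset_Ioi (by linarith))) hint
    have hpos : ∫⁻ ξ in Set.Ioo 0 r, F ξ < ∞ := by
      rw [← himg_pos, Hsub _ (Or.inl rfl)]; exact hIoi
    have hneg : ∫⁻ ξ in Set.Ioo (-r) 0, F ξ < ∞ := by
      rw [← himg_neg, Hsub _ (Or.inr rfl)]; exact hIoi
    have hball : Metric.ball (0 : ℝ) r = Set.Ioo (-r) r := by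
      rw [Real.ball_eq_Ioo]; norm_num
    have hsplit : Set.Ioo (-r) r ⊆ Set.Ioo (-r) 0 ∪ Set.Ico 0 r := by
      intro t ht
      rcases lt_or_ge t 0 with h | h
      · exact Or.inl ⟨ht.1, h⟩
      · exact Or.inr ⟨h, ht.2⟩
    rw [hball]
    calc ∫⁻ ξ in Set.Ioo (-r) r, F ξ
        ≤ ∫⁻ ξ in Set.Ioo (-r) 0 ∪ Set.Ico 0 r, F ξ := lintegral_mono_set hsplit
      _ ≤ (∫⁻ ξ in Set.Ioo (-r) 0, F ξ) + ∫⁻ ξ in Set.Ico 0 r, F ξ :=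
          lintegral_union_le _ _ _
      _ < ∞ := by
          have : ∫⁻ ξ in Set.Ico 0 r, F ξ = ∫⁻ ξ in Set.Ioo 0 r, F ξ :=
            (setLIntegral_congr (Ioo_ae_eq_Ico (μ := volume) (a := 0) (b := r))).symm
          rw [this]
          exact ENNReal.add_lt_top.mpr ⟨hneg, hpos⟩
  exact ⟨r, hrpos, lt_of_le_of_lt step1 hFfin⟩
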